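/- Under the Setup, let f be the intersection point of L₁'' with the side [AB] and let j be the intersection point of L₁'' with the side [BC]. Then |Af| ≥ 1 and |jC| ≥ 1. -/

import Mathlib

open Real

noncomputable section

/-- Points of the Euclidean plane. -/
abbrev Pt := EuclideanSpace ℝ (Fin 2)

/-- An axis-aligned rectangle (all sides of positive length, parallel to the axes),
given by the coordinates of its sides. -/
structure AARect where
  xmin : ℝ
  xmax : ℝ
  ymin : ℝ
  ymax : ℝ
  hx : xmin < xmax
  hy : ymin < ymax

/-- The set of points of an axis-aligned rectangle. -/
def AARect.set (R : AARect) : Set Pt :=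
  {q | q 0 ∈ Set.Icc R.xmin R.xmax ∧ q 1 ∈ Set.Icc R.ymin R.ymax}

/-- The center of an axis-aligned rectangle. -/
def AARect.center (R : AARect) : Pt :=
  !₂[(R.xmin + R.xmax) / 2, (R.ymin + R.ymax) / 2]

/-- The North-West vertex `A`. -/
def AARect.A (R : AARect) : Pt := !₂[R.xmin, R.ymax]

/-- The North-East vertex `B`. -/
def AARect.B (R : AARect) : Pt := !₂[R.xmax, R.ymax]

/-- The South-East vertex `C`. -/
def AARect.C (R : AARect) : Pt := !₂[R.xmax, R.ymin]

/-- The South-West vertex `D`. -/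
def AARect.D (R : AARect) : Pt := !₂[R.xmin, R.ymin]

/-- The line through the point `p` with direction vector `v`. -/
def lineThrough (p v : Pt) : Set Pt := {q | ∃ t : ℝ, q = p + t • v}

/-- The closed half-plane to the right (East) of the (non-vertical) line through `p` with
direction `v`: the set of points having, on that line, a point with the same second
coordinate and a smaller-or-equal first coordinate. -/
def rightOf (p v : Pt) : Set Pt :=
  {q | ∃ w ∈ lineThrough p v, w 1 = q 1 ∧ w 0 ≤ q 0}

private lemma aux_w_nonneg (u w σ v0 v1 : ℝ)
    (h1 : (u - σ * v0) * (v0 * v1) ≤ 0)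
    (e1 : u * v0 * v1 + w * v1 ^ 2 = 0)
    (e2 : σ * v1 * v0 ^ 2 = w * v0 ^ 2)
    (hvv : 0 < v0 ^ 2 + v1 ^ 2) : 0 ≤ w := by
  nlinarith [h1, e1, e2, hvv]

private lemma aux_ws (w s : ℝ) (hw0 : 0 ≤ w) (hs0 : 0 < s)
    (hws2 : (w * s) ^ 2 = 4) : w * s = 2 := by
  have hz : (w * s - 2) * (w * s + 2) = 0 := by linear_combination hws2
  rcases mul_eq_zero.mp hz with h | h
  · linarith
  · nlinarith [mul_nonneg hw0 hs0.le]

private lemma aux_2s (c s : ℝ) (hs0 : 0 < s) (hs2 : s ^ 2 = 1 + c ^ 2) :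
    c + 1 ≤ 2 * s ∧ 1 ≤ s := by
  constructor
  · nlinarith [sq_nonneg (c - 1), sq_nonneg (2 * s - (c + 1))]
  · nlinarith [sq_nonneg c]

private lemma aux_goal1 (c G t r s : ℝ) (hc : 0 < c) (h2s : c + 1 ≤ 2 * s)
    (hkey : c * G = t + 2 * s - r) (hlt : r - t < 1) : 1 ≤ G := by
  nlinarith [hkey, hlt, h2s, hc]

set_option maxHeartbeats 1000000 in
/-- Setup: `R = ABCD` is an axis-aligned rectangle with all sides of length at least 4 and
center `p`; `L₁` is the line through `p` with direction `v` of negative slope, meeting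
`[AD]` at `a` and `[BC]` at `d`, with `|Aa| < 1`; `p'` is the point at distance 2 from `p`
on the perpendicular to `L₁` through `p`, on the side of `L₁` to the right of `L₁`;
`L₁''` is the line through `p'` parallel to `L₁`. If `f` is the intersection point of
`L₁''` with the side `[AB]` and `j` the intersection point of `L₁''` with the side `[BC]`,
then `|Af| ≥ 1` and `|jC| ≥ 1`. -/
theorem dist_Af_jC_ge_one (R : AARect)
    (h4x : 4 ≤ R.xmax - R.xmin) (h4y : 4 ≤ R.ymax - R.ymin)
    (v : Pt) (hv : v 0 * v 1 < 0)
    (a : Pt) (haL : a ∈ lineThrough R.center v)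
    (ha0 : a 0 = R.xmin) (ha1 : a 1 ∈ Set.Icc R.ymin R.ymax)
    (haA : dist R.A a < 1)
    (d : Pt) (hdL : d ∈ lineThrough R.center v)
    (hd0 : d 0 = R.xmax) (hd1 : d 1 ∈ Set.Icc R.ymin R.ymax)
    (p' : Pt) (hp'dist : dist R.center p' = 2)
    (hp'perp : (inner ℝ (p' - R.center) v : ℝ) = 0)
    (hp'side : p' ∈ rightOf R.center v)
    (f : Pt) (hfL : f ∈ lineThrough p' v)
    (hf1 : f 1 = R.ymax) (hf0 : f 0 ∈ Set.Icc R.xmin R.xmax)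
    (j : Pt) (hjL : j ∈ lineThrough p' v)
    (hj0 : j 0 = R.xmax) (hj1 : j 1 ∈ Set.Icc R.ymin R.ymax) :
    1 ≤ dist R.A f ∧ 1 ≤ dist j R.C := by
  have hv0 : v 0 ≠ 0 := by intro h; rw [h] at hv; simp at hv
  have hv1 : v 1 ≠ 0 := by intro h; rw [h] at hv; simp at hv
  -- the (positive) negated slope
  obtain ⟨c, hc_def⟩ : ∃ x : ℝ, x = -(v 1 / v 0) := ⟨_, rfl⟩
  have hc : 0 < c := by
    have h1 : v 1 / v 0 = (v 0 * v 1) / (v 0 ^ 2) := by field_simp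
    have h2 : v 1 / v 0 < 0 := by
      rw [h1]; exact div_neg_of_neg_of_pos hv (by positivity)
    rw [hc_def]; linarith
  have hv1c : v 1 = -(c * v 0) := by rw [hc_def]; field_simp
  -- coordinates of vertices
  have hA0 : R.A 0 = R.xmin := by simp [AARect.A]
  have hA1 : R.A 1 = R.ymax := by simp [AARect.A]
  have hC0 : R.C 0 = R.xmax := by simp [AARect.C]
  have hC1 : R.C 1 = R.ymin := by simp [AARect.C]
  -- point a
  obtain ⟨ta, hta⟩ := haL
  have ha_0 : a 0 = R.center 0 + ta * v 0 := by rw [hta]; simp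
  have ha_1 : a 1 = R.center 1 + ta * v 1 := by rw [hta]; simp
  have hta0 : ta * v 0 = R.xmin - R.center 0 := by rw [← ha0, ha_0]; ring
  have ha1eq : a 1 = R.center 1 - c * (R.xmin - R.center 0) := by
    rw [ha_1, hv1c, ← hta0]; ring
  -- point d
  obtain ⟨td, htd⟩ := hdL
  have hd_0 : d 0 = R.center 0 + td * v 0 := by rw [htd]; simp
  have hd_1 : d 1 = R.center 1 + td * v 1 := by rw [htd]; simp
  have htd0 : td * v 0 = R.xmax - R.center 0 := by rw [← hd0, hd_0]; ring
  have hd1eq : d 1 = R.center 1 - c * (R.xmax - R.center 0) := by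
    rw [hd_1, hv1c, ← htd0]; ring
  -- offset of p'
  obtain ⟨u, hu_def⟩ : ∃ x : ℝ, x = p' 0 - R.center 0 := ⟨_, rfl⟩
  obtain ⟨w, hw_def⟩ : ∃ x : ℝ, x = p' 1 - R.center 1 := ⟨_, rfl⟩
  have hperp : u * v 0 + w * v 1 = 0 := by
    have h := hp'perp
    simp only [PiLp.inner_apply, Fin.sum_univ_two, RCLike.inner_apply, conj_trivial,
      PiLp.sub_apply] at h
    rw [hu_def, hw_def]; linarith [h]
  have h4 : u ^ 2 + w ^ 2 = 4 := by
    have h2 : dist R.center p' ^ 2 = 4 := by rw [hp'dist]; norm_num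
    rw [EuclideanSpace.dist_eq, Fin.sum_univ_two, Real.sq_sqrt (by positivity)] at h2
    simp only [Real.dist_eq, sq_abs] at h2
    rw [hu_def, hw_def]; linear_combination h2
  -- w ≥ 0 from the side condition
  obtain ⟨wp, ⟨σ, hσ⟩, hwp1, hwp0⟩ := hp'side
  have hσ1 : σ * v 1 = w := by
    have : wp 1 = R.center 1 + σ * v 1 := by rw [hσ]; simp
    rw [hw_def, ← hwp1, this]; ring
  have hσ0 : R.center 0 + σ * v 0 ≤ p' 0 := by
    calc R.center 0 + σ * v 0 = wp 0 := by rw [hσ]; simp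
    _ ≤ p' 0 := hwp0
  have hw0 : 0 ≤ w := by
    have h1 : (u - σ * v 0) * (v 0 * v 1) ≤ 0 :=
      mul_nonpos_of_nonneg_of_nonpos (by rw [hu_def]; linarith) hv.le
    have e1 : u * v 0 * v 1 + w * v 1 ^ 2 = 0 := by linear_combination v 1 * hperp
    have e2 : σ * v 1 * v 0 ^ 2 = w * v 0 ^ 2 := by linear_combination (v 0 ^ 2) * hσ1
    exact aux_w_nonneg u w σ (v 0) (v 1) h1 e1 e2 (by positivity)
  have hu : u = c * w := by
    have hz : (u - c * w) * v 0 = 0 := by linear_combination hperp - w * hv1c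
    rcases mul_eq_zero.mp hz with h | h
    · linarith
    · exact absurd h hv0
  -- s = sqrt(1+c^2)
  obtain ⟨s, hs_def⟩ : ∃ x : ℝ, x = Real.sqrt (1 + c ^ 2) := ⟨_, rfl⟩
  have hs2 : s ^ 2 = 1 + c ^ 2 := by rw [hs_def]; exact Real.sq_sqrt (by positivity)
  have hs0 : 0 < s := by rw [hs_def]; exact Real.sqrt_pos.mpr (by positivity)
  have hws2 : (w * s) ^ 2 = 4 := by
    rw [mul_pow, hs2]; linear_combination h4 - (u + c * w) * hu
  have hws : w * s = 2 := aux_ws w s hw0 hs0 hws2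
  -- key inequalities on s
  obtain ⟨h2s, hs1⟩ := aux_2s c s hs0 hs2
  -- constraint from |Aa| < 1
  have hdAa : dist R.A a = |R.ymax - a 1| := by
    rw [EuclideanSpace.dist_eq, Fin.sum_univ_two, Real.dist_eq, Real.dist_eq, hA0, hA1, ha0,
      sub_self, abs_zero]
    rw [show (0:ℝ) ^ 2 + |R.ymax - a 1| ^ 2 = (R.ymax - a 1) ^ 2 by rw [sq_abs]; ring]
    exact Real.sqrt_sq_eq_abs _
  have haC : R.ymax - a 1 < 1 := by
    have := haA; rw [hdAa] at this
    exact lt_of_le_of_lt (le_abs_self _) this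
  -- constraint from d 1 ≥ ymin
  have hdC : R.ymin ≤ d 1 := hd1.1
  -- point f
  obtain ⟨tf, htf⟩ := hfL
  have hf_0 : f 0 = p' 0 + tf * v 0 := by rw [htf]; simp
  have hf_1 : f 1 = p' 1 + tf * v 1 := by rw [htf]; simp
  have hfe : c * (f 0 - p' 0) = p' 1 - R.ymax := by
    have h1 : tf * v 1 = R.ymax - p' 1 := by rw [← hf1, hf_1]; ring
    have h2 : tf * v 0 = f 0 - p' 0 := by rw [hf_0]; ring
    rw [hv1c] at h1
    linear_combination -h1 - c * h2
  -- point j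
  obtain ⟨tj, htj⟩ := hjL
  have hj_0 : j 0 = p' 0 + tj * v 0 := by rw [htj]; simp
  have hj_1 : j 1 = p' 1 + tj * v 1 := by rw [htj]; simp
  have hje : j 1 = p' 1 - c * (R.xmax - p' 0) := by
    have h1 : tj * v 0 = R.xmax - p' 0 := by rw [← hj0, hj_0]; ring
    rw [hj_1, hv1c, ← h1]; ring
  -- w(1+c^2) = 2s
  have hwc2 : w * (1 + c ^ 2) = 2 * s := by
    calc w * (1 + c ^ 2) = (w * s) * s := by rw [← hs2]; ring
    _ = 2 * s := by rw [hws]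
  have hp'0 : p' 0 = R.center 0 + c * w := by rw [← hu, hu_def]; ring
  have hp'1 : p' 1 = R.center 1 + w := by rw [hw_def]; ring
  constructor
  · -- |Af| ≥ 1
    have hdAf : dist R.A f = f 0 - R.xmin := by
      rw [EuclideanSpace.dist_eq, Fin.sum_univ_two, Real.dist_eq, Real.dist_eq, hA0, hA1, hf1,
        sub_self, abs_zero]
      rw [show |R.xmin - f 0| ^ 2 + (0:ℝ) ^ 2 = (f 0 - R.xmin) ^ 2 by rw [sq_abs]; ring]
      rw [Real.sqrt_sq_eq_abs, abs_of_nonneg (by linarith [hf0.1])]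
    rw [hdAf]
    have hkey : c * (f 0 - R.xmin) =
        c * (R.center 0 - R.xmin) + w * (1 + c ^ 2) - (R.ymax - R.center 1) := by
      linear_combination hfe + c * hp'0 + hp'1
    rw [hwc2] at hkey
    exact aux_goal1 c (f 0 - R.xmin) (c * (R.center 0 - R.xmin)) (R.ymax - R.center 1) s hc h2s
      hkey (by rw [ha1eq] at haC; linarith)
  · -- |jC| ≥ 1
    have hdjC : dist j R.C = j 1 - R.ymin := by
      rw [EuclideanSpace.dist_eq, Fin.sum_univ_two, Real.dist_eq, Real.dist_eq, hC0, hC1, hj0,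
        sub_self, abs_zero]
      rw [show (0:ℝ) ^ 2 + |j 1 - R.ymin| ^ 2 = (j 1 - R.ymin) ^ 2 by rw [sq_abs]; ring]
      rw [Real.sqrt_sq_eq_abs, abs_of_nonneg (by linarith [hj1.1])]
    rw [hdjC]
    have hkey : j 1 - R.ymin =
        (R.center 1 - R.ymin) + w * (1 + c ^ 2) - c * (R.xmax - R.center 0) := by
      rw [hje, hp'0, hp'1]; ring
    rw [hwc2] at hkey
    linarith [hkey, hdC, hd1eq, hs1]
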